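/- Let A be a Prüfer domain with fraction field K, and let X → Spec(A) be a proper morphism of finite presentation. Then the natural map X(A) → X(K) on points is bijective. -/

import Mathlib

open AlgebraicGeometry CategoryTheory CategoryTheory.Limits

private lemma denseRange_of_comp_emb {α β γ : Type*} [TopologicalSpace α] [TopologicalSpace β]
    [TopologicalSpace γ] {ι : α → β} {e : β → γ} (he : Topology.IsEmbedding e)
    (h : DenseRange (e ∘ ι)) : DenseRange ι := by
  rw [DenseRange, dense_iff_closure_eq, he.closure_eq_preimage_closure_image,
    ← Set.range_comp]
  have : closure (Set.range (e ∘ ι)) = Set.univ := h.closure_eq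
  rw [this]
  exact Set.preimage_univ

section Main

variable (A : Type) [CommRing A] [IsDomain A]

local notation "Kf" => FractionRing A
local notation "S" => Spec (CommRingCat.of A)

noncomputable abbrev gmap : Spec (CommRingCat.of Kf) ⟶ S :=
  Spec.map (CommRingCat.ofHom (algebraMap A Kf))

lemma gmap_base (x : PrimeSpectrum Kf) :
    (gmap A).base x = (⟨⊥, Ideal.bot_prime⟩ : PrimeSpectrum A) := by
  show PrimeSpectrum.comap (algebraMap A Kf) x = _
  apply PrimeSpectrum.ext
  show x.asIdeal.comap (algebraMap A Kf) = ⊥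
  rw [Ideal.eq_bot_of_prime x.asIdeal]
  exact RingHom.ker_eq_bot_iff_eq_zero _ |>.mpr fun y hy =>
    (map_eq_zero_iff _ (IsFractionRing.injective A Kf)).mp hy

lemma gmap_denseRange : DenseRange (gmap A).base := by
  have hr : Set.range (gmap A).base = {(⟨⊥, Ideal.bot_prime⟩ : PrimeSpectrum A)} := by
    apply Set.eq_singleton_iff_nonempty_unique_mem.mpr
    refine ⟨⟨(gmap A).base (⟨⊥, Ideal.bot_prime⟩ : PrimeSpectrum Kf), Set.mem_range_self _⟩, ?_⟩
    rintro y ⟨x, rfl⟩; exact gmap_base A x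
  rw [DenseRange]
  show Dense (Set.range (gmap A).base)
  rw [hr, dense_iff_closure_eq]
  show closure ({(⟨⊥, Ideal.bot_prime⟩ : PrimeSpectrum A)} : Set (PrimeSpectrum A)) = Set.univ
  rw [PrimeSpectrum.closure_singleton]
  simp

instance : IsDominant (gmap A) := ⟨gmap_denseRange A⟩

lemma gmap_mem_opens (U : (S : Scheme).Opens) {p : S} (hp : p ∈ U) (x : PrimeSpectrum Kf) :
    (gmap A).base x ∈ U := by
  rw [gmap_base]
  have hd : Dense ({(⟨⊥, Ideal.bot_prime⟩ : PrimeSpectrum A)} : Set S) := by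
    show Dense ({(⟨⊥, Ideal.bot_prime⟩ : PrimeSpectrum A)} : Set (PrimeSpectrum A))
    rw [dense_iff_closure_eq, PrimeSpectrum.closure_singleton]; simp
  obtain ⟨y, hy1, hy2⟩ := hd.inter_open_nonempty (U : Set S) U.2 ⟨p, hp⟩
  replace hy2 : y = (⟨⊥, Ideal.bot_prime⟩ : PrimeSpectrum A) := hy2
  rwa [← hy2]

lemma key_lift (hP : ∀ (p : Ideal A) [p.IsPrime], ValuationRing (Localization.AtPrime p))
    (X : Scheme) (f : X ⟶ Spec (CommRingCat.of A)) [IsProper f]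
    (t : Spec (CommRingCat.of Kf) ⟶ X) (ht : t ≫ f = gmap A) (p : S) :
    ∃ (U : (Spec (CommRingCat.of A)).Opens) (_ : p ∈ U) (h : U.toScheme ⟶ X),
      h ≫ f = U.ι ∧
      ∀ gU : Spec (CommRingCat.of Kf) ⟶ U.toScheme, gU ≫ U.ι = gmap A → gU ≫ h = t := by
  have hvc : ValuativeCriterion f := by
    have h := ‹IsProper f›
    rw [IsProper.eq_valuativeCriterion] at h
    exact h.1.1.1
  have hq : (p : PrimeSpectrum A) = p := rfl
  set q : PrimeSpectrum A := p with hq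
  letI : ValuationRing (Localization.AtPrime q.asIdeal) := hP q.asIdeal
  have htower : (algebraMap A Kf) =
      (algebraMap (Localization.AtPrime q.asIdeal) Kf).comp
        (algebraMap A (Localization.AtPrime q.asIdeal)) :=
    IsScalarTower.algebraMap_eq _ _ _
  let sq : ValuativeCommSq f :=
  { R := Localization.AtPrime q.asIdeal
    K := Kf
    i₁ := t
    i₂ := Spec.map (CommRingCat.ofHom (algebraMap A (Localization.AtPrime q.asIdeal)))
    commSq := ⟨by
      rw [ht, ← Spec.map_comp]
      show Spec.map (CommRingCat.ofHom (algebraMap A Kf)) = _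
      rw [htower]
      rfl⟩ }
  obtain ⟨hu⟩ := hvc sq
  obtain ⟨l, fac_left, fac_right⟩ := hu.default
  haveI : IsDomain (CommRingCat.of A) := ‹IsDomain A›
  let st := Spec.stalkIso (CommRingCat.of A) q
  let φ : Spec ((Spec (CommRingCat.of A)).presheaf.stalk p) ⟶ X := Spec.map st.inv ≫ l
  have hcomp : CommRingCat.ofHom (algebraMap A (Localization.AtPrime q.asIdeal)) ≫ st.inv =
      StructureSheaf.toStalk A q := by
    exact (Spec.algebraMap_stalkIso_inv (R := CommRingCat.of A) (x := q)).trans rfl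
  have hφ : φ ≫ f = (Spec (CommRingCat.of A)).fromSpecStalk p ≫ 𝟙 _ := by
    rw [Category.comp_id]
    show Spec.map st.inv ≫ l ≫ f = _
    rw [fac_right]
    show Spec.map st.inv ≫
      Spec.map (CommRingCat.ofHom (algebraMap A (Localization.AtPrime q.asIdeal))) = _
    rw [← Spec.map_comp, hcomp, Scheme.Spec_fromSpecStalk']
    rfl
  obtain ⟨U, hpU, h, h1, h2⟩ := spread_out_of_isGermInjective' (𝟙 (Spec (CommRingCat.of A))) f φ hφ
  refine ⟨U, hpU, h, by rw [h2, Category.comp_id], ?_⟩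
  intro gU hgU
  have hg' : gU = Spec.map (CommRingCat.ofHom (algebraMap (Localization.AtPrime q.asIdeal) Kf)) ≫
      Spec.map st.hom ≫ U.fromSpecStalkOfMem p hpU := by
    rw [← cancel_mono U.ι, hgU, Category.assoc, Category.assoc,
      Scheme.Opens.fromSpecStalkOfMem_ι]
    have hfs : (Spec (CommRingCat.of A)).fromSpecStalk p = φ ≫ f := by
      rw [hφ, Category.comp_id]
    rw [hfs]
    show gmap A = Spec.map (CommRingCat.ofHom (algebraMap (Localization.AtPrime q.asIdeal) Kf)) ≫
      Spec.map st.hom ≫ (Spec.map st.inv ≫ l) ≫ f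
    simp only [Category.assoc]
    have hsthi : Spec.map st.hom ≫ Spec.map st.inv = 𝟙 _ := by
      rw [← Spec.map_comp, Iso.inv_hom_id, Spec.map_id]
    rw [fac_right, reassoc_of% hsthi]
    show gmap A = Spec.map _ ≫
      Spec.map (CommRingCat.ofHom (algebraMap A (Localization.AtPrime q.asIdeal)))
    rw [← Spec.map_comp]
    show Spec.map (CommRingCat.ofHom (algebraMap A Kf)) = _
    rw [htower]
    rfl
  rw [hg']
  simp only [Category.assoc]
  rw [← h1]
  show Spec.map _ ≫ Spec.map st.hom ≫ Spec.map st.inv ≫ l = t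
  have hsthi : Spec.map st.hom ≫ Spec.map st.inv = 𝟙 _ := by
    rw [← Spec.map_comp, Iso.inv_hom_id, Spec.map_id]
  rw [reassoc_of% hsthi]
  exact fac_left


end Main

theorem prufer_valuative_bijective' (A : Type) [CommRing A] [IsDomain A]
    (hPrufer : ∀ (p : Ideal A) [p.IsPrime], ValuationRing (Localization.AtPrime p))
    (X : Scheme) (f : X ⟶ Spec (CommRingCat.of A))
    [IsProper f] [LocallyOfFinitePresentation f] :
    Function.Bijective
      (fun s : {s : Spec (CommRingCat.of A) ⟶ X // s ≫ f = 𝟙 _} =>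
        (⟨Spec.map (CommRingCat.ofHom (algebraMap A (FractionRing A))) ≫ s.1,
            by rw [Category.assoc, s.2, Category.comp_id]⟩ :
          {t : Spec (CommRingCat.of (FractionRing A)) ⟶ X //
            t ≫ f = Spec.map (CommRingCat.ofHom (algebraMap A (FractionRing A)))})) := by
  haveI : IsDomain (CommRingCat.of A) := ‹IsDomain A›
  haveI : IsDominant (gmap A) := ⟨gmap_denseRange A⟩
  constructor
  · rintro ⟨s₁, hs₁⟩ ⟨s₂, hs₂⟩ hst
    simp only [Subtype.mk.injEq] at hst
    exact Subtype.ext (ext_of_isDominant_of_isSeparated f (hs₁.trans hs₂.symm) (gmap A) hst)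
  · rintro ⟨t, ht⟩
    choose U hU hmap hfac hgen using key_lift A hPrufer X f t ht
    have hrange : ∀ p, Set.range (gmap A).base ⊆ (U p : Set (Spec (CommRingCat.of A))) := by
      rintro p _ ⟨x, rfl⟩
      exact gmap_mem_opens A (U p) (hU p) x
    let glift : ∀ p, Spec (CommRingCat.of (FractionRing A)) ⟶ (U p).toScheme := fun p =>
      IsOpenImmersion.lift (U p).ι (gmap A) (by rw [Scheme.Opens.range_ι]; exact hrange p)
    have hglift : ∀ p, glift p ≫ (U p).ι = gmap A := fun p => IsOpenImmersion.lift_fac _ _ _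
    let 𝒰 : (Spec (CommRingCat.of A)).OpenCover :=
      { I₀ := Spec (CommRingCat.of A)
        X := fun p => (U p).toScheme
        f := fun p => (U p).ι
        mem₀ := (Scheme.Cover.mkOfCovers (Spec (CommRingCat.of A)) (fun p => (U p).toScheme)
            (fun p => (U p).ι) (fun p => by
              obtain ⟨y, hy⟩ : p ∈ Set.range (U p).ι := by rw [Scheme.Opens.range_ι]; exact hU p
              exact ⟨p, y, hy⟩)).mem₀ }
    have compat : ∀ p r : 𝒰.I₀, pullback.fst (𝒰.f p) (𝒰.f r) ≫ hmap p =
        pullback.snd (𝒰.f p) (𝒰.f r) ≫ hmap r := by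
      intro p r
      have hcomm : glift p ≫ (U p).ι = glift r ≫ (U r).ι := by rw [hglift, hglift]
      let ι : Spec (CommRingCat.of (FractionRing A)) ⟶ pullback (𝒰.f p) (𝒰.f r) :=
        pullback.lift (glift p) (glift r) hcomm
      haveI : IsReduced (pullback (𝒰.f p) (𝒰.f r)) :=
        isReduced_of_isOpenImmersion (pullback.fst (𝒰.f p) (𝒰.f r) ≫ (U p).ι)
      have hιe : ι ≫ pullback.fst (𝒰.f p) (𝒰.f r) ≫ (U p).ι = gmap A := by
        rw [pullback.lift_fst_assoc, hglift]
      haveI : IsDominant ι := by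
        constructor
        apply denseRange_of_comp_emb
          (e := (pullback.fst (𝒰.f p) (𝒰.f r) ≫ (U p).ι).base)
          ((pullback.fst (𝒰.f p) (𝒰.f r) ≫ (U p).ι).isOpenEmbedding.toIsEmbedding)
        have : (pullback.fst (𝒰.f p) (𝒰.f r) ≫ (U p).ι).base ∘ ι.base =
            (gmap A).base := by
          rw [← hιe]; rfl
        rw [this]
        exact gmap_denseRange A
      apply ext_of_isDominant_of_isSeparated f ?_ ι ?_
      · rw [Category.assoc, Category.assoc, hfac, hfac, pullback.condition]
      · rw [← Category.assoc, ← Category.assoc]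
        show (ι ≫ pullback.fst _ _) ≫ hmap p = (ι ≫ pullback.snd _ _) ≫ hmap r
        rw [pullback.lift_fst, pullback.lift_snd, hgen p _ (hglift p), hgen r _ (hglift r)]
    let s₀ := 𝒰.glueMorphisms (fun p => hmap p) compat
    have hs₀f : s₀ ≫ f = 𝟙 _ := by
      apply 𝒰.hom_ext
      intro p
      rw [← Category.assoc, 𝒰.ι_glueMorphisms, hfac, Category.comp_id]
    refine ⟨⟨s₀, hs₀f⟩, ?_⟩
    apply Subtype.ext
    show gmap A ≫ s₀ = t
    have : Nonempty (PrimeSpectrum A) := inferInstance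
    obtain ⟨p⟩ := this
    rw [← hglift p, Category.assoc]
    have : (U p).ι ≫ s₀ = hmap p := 𝒰.ι_glueMorphisms _ _ p
    rw [this, hgen p _ (hglift p)]

/-- Let `A` be a Prüfer domain (an integral domain all of whose localizations
at primes are valuation rings) with fraction field `K`, and let
`X → Spec A` be a proper morphism of finite presentation. Then the natural
map `X(A) → X(K)`, from sections over `Spec A` to `K`-points of the generic
fiber, is bijective. -/
theorem prufer_valuative_bijective (A : Type) [CommRing A] [IsDomain A]
    (hPrufer : ∀ (p : Ideal A) [p.IsPrime], ValuationRing (Localization.AtPrime p))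
    (X : Scheme) (f : X ⟶ Spec (CommRingCat.of A))
    [IsProper f] [LocallyOfFinitePresentation f] :
    Function.Bijective
      (fun s : {s : Spec (CommRingCat.of A) ⟶ X // s ≫ f = 𝟙 _} =>
        (⟨Spec.map (CommRingCat.ofHom (algebraMap A (FractionRing A))) ≫ s.1,
            by rw [Category.assoc, s.2, Category.comp_id]⟩ :
          {t : Spec (CommRingCat.of (FractionRing A)) ⟶ X //
            t ≫ f = Spec.map (CommRingCat.ofHom (algebraMap A (FractionRing A)))})) := by
  exact prufer_valuative_bijective' A hPrufer X f
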